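/- Let F be a field, R_n = F[X^{1/2^n}], D_n = F[X^{1/2^n}, X^{-1/2^n}] and D = ⋃_{n≥0} D_n. Fix n ≥ 0 and let f(X^{1/2^n}) be an irreducible element of R_n with f(0) ≠ 0. Then the following are equivalent: (1) f(X^{1/2^n}) is a prime element of D; (2) f(X^{1/2^n}) is an irreducible element of D; (3) f(X^4) is an irreducible element of F[X]; (4) f(X^{1/2^k}) is a prime element of D for all k ≥ 0. -/

import Mathlib

set_option synthInstance.maxHeartbeats 1000000
set_option maxHeartbeats 1000000

open Polynomial AddMonoidAlgebra

noncomputable section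

/-- The subgroup of `ℚ` generated by `{1/pⁿ : n ∈ ℕ}`. -/
def expGroup (p : ℕ) : AddSubgroup ℚ :=
  AddSubgroup.closure (Set.range fun n : ℕ => ((p : ℚ) ^ n)⁻¹)

instance (p : ℕ) : UniqueSums (expGroup p) :=
  UniqueSums.of_injective_addHom ((expGroup p).subtype : _ →+ ℚ).toAddHom
    Subtype.val_injective inferInstance

/-- `D = ⋃_{n≥0} F[X^{1/pⁿ}, X^{-1/pⁿ}]`, realized as the group algebra `F[X;G]`
where `G` is the subgroup of `ℚ` generated by `{1/pⁿ : n ≥ 0}`. -/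
abbrev LaurentUnion (F : Type*) [Field F] (p : ℕ) : Type _ :=
  AddMonoidAlgebra F (expGroup p)

instance (F : Type*) [Field F] (p : ℕ) : IsDomain (LaurentUnion F p) :=
  NoZeroDivisors.to_isDomain _

/-- The element `1/pⁿ` of the subgroup `G`. -/
def expGen (p n : ℕ) : expGroup p :=
  ⟨((p : ℚ) ^ n)⁻¹, AddSubgroup.subset_closure ⟨n, rfl⟩⟩

/-- The monomial `X^{1/pⁿ}` in `D`. -/
def XRoot (F : Type*) [Field F] (p n : ℕ) : LaurentUnion F p :=
  AddMonoidAlgebra.single (expGen p n) 1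

/-- The subring `Dₙ = F[X^{1/pⁿ}, X^{-1/pⁿ}]` of `D`, as a subalgebra. -/
def DSub (F : Type*) [Field F] (p n : ℕ) : Subalgebra F (LaurentUnion F p) :=
  Algebra.adjoin F {XRoot F p n, AddMonoidAlgebra.single (-expGen p n) 1}

/-- The subring `Rₙ = F[X^{1/pⁿ}]` of `D`, as a subalgebra. -/
def RSub (F : Type*) [Field F] (p n : ℕ) : Subalgebra F (LaurentUnion F p) :=
  Algebra.adjoin F {XRoot F p n}

lemma XRoot_mem_DSub (F : Type*) [Field F] (p n : ℕ) : XRoot F p n ∈ DSub F p n :=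
  Algebra.subset_adjoin (by simp)

lemma aeval_XRoot_mem_DSub (F : Type*) [Field F] (p n : ℕ) (f : Polynomial F) :
    Polynomial.aeval (XRoot F p n) f ∈ DSub F p n :=
  Algebra.adjoin_le (Set.singleton_subset_iff.mpr (XRoot_mem_DSub F p n))
    (Polynomial.aeval_mem_adjoin_singleton _ _)

lemma aeval_XRoot_mem_RSub (F : Type*) [Field F] (p n : ℕ) (f : Polynomial F) :
    Polynomial.aeval (XRoot F p n) f ∈ RSub F p n :=
  Polynomial.aeval_mem_adjoin_singleton _ _

lemma XRoot_pow (F : Type*) [Field F] {p : ℕ} (hp : p ≠ 0) {m n : ℕ} (h : m ≤ n) :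
    XRoot F p n ^ p ^ (n - m) = XRoot F p m := by
  rw [XRoot, XRoot, AddMonoidAlgebra.single_pow, one_pow]
  congr 1
  ext
  have hp' : (p : ℚ) ≠ 0 := Nat.cast_ne_zero.mpr hp
  push_cast
  rw [nsmul_eq_mul]
  push_cast [expGen]
  field_simp
  rw [← pow_add, Nat.sub_add_cancel h]

lemma DSub_mono (F : Type*) [Field F] {p : ℕ} (hp : p ≠ 0) {m n : ℕ} (h : m ≤ n) :
    DSub F p m ≤ DSub F p n := by
  apply Algebra.adjoin_le
  rintro x (rfl | rfl)
  · rw [← XRoot_pow F hp h]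
    exact pow_mem (Algebra.subset_adjoin (by simp)) _
  · rw [show (AddMonoidAlgebra.single (-expGen p m) 1 : LaurentUnion F p)
        = (AddMonoidAlgebra.single (-expGen p n) 1 : LaurentUnion F p) ^ p ^ (n - m) from ?_]
    · exact pow_mem (Algebra.subset_adjoin (by simp)) _
    · rw [AddMonoidAlgebra.single_pow, one_pow]
      congr 1
      ext
      have hp' : (p : ℚ) ≠ 0 := Nat.cast_ne_zero.mpr hp
      push_cast
      rw [nsmul_eq_mul]
      push_cast [expGen]
      field_simp
      rw [← pow_add, Nat.add_sub_of_le h]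

section Capelli

open IntermediateField

universe u

/-- Core computation: if `g` has minimal polynomial `X² - a` over `K`, `u² = 1`,
and some `K`-linear combination `c + d·g` squares to `u·g`, then `a = -4c⁴`. -/
lemma sq_eq_unit_mul_gen_contra {K L : Type*} [Field K] [Field L] [Algebra K L]
    {a u : K} (ha2 : ∀ c : K, -(4 * c ^ 4) ≠ a)
    {g : L} (hgint : IsIntegral K g) (hg : minpoly K g = X ^ 2 - C a)
    (c d : K) (hu : u * u = 1)
    (ht : (algebraMap K L c + algebraMap K L d * g) ^ 2 = algebraMap K L u * g) : False := by
  have hg2 : g ^ 2 = algebraMap K L a := by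
    have h := minpoly.aeval K g
    rw [hg] at h
    simpa [sub_eq_zero] using h
  set φ := algebraMap K L with hφ
  have hp : (aeval g) (C (2 * c * d - u) * X + C (c ^ 2 + a * d ^ 2)) = 0 := by
    simp only [map_add, map_mul, map_sub, aeval_C, aeval_X, map_pow, map_ofNat, map_one]
    linear_combination ht - (φ d) ^ 2 * hg2
  have hdeg : (C (2 * c * d - u) * X + C (c ^ 2 + a * d ^ 2)).degree < 2 :=
    lt_of_le_of_lt (degree_linear_le) (by norm_num)
  have hp0 : (C (2 * c * d - u) * X + C (c ^ 2 + a * d ^ 2)) = 0 := by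
    by_contra hne
    have := minpoly.degree_le_of_ne_zero K g hne hp
    rw [hg, degree_X_pow_sub_C (by norm_num)] at this
    exact absurd (this.trans_lt hdeg) (lt_irrefl _)
  have h0 : c ^ 2 + a * d ^ 2 = 0 := by
    have h := congrArg (fun p => Polynomial.coeff p 0) hp0
    simpa only [Polynomial.coeff_add, coeff_C_mul, coeff_X_zero, coeff_C, Polynomial.coeff_zero, mul_zero, zero_add,
      if_pos rfl, if_true] using h
  have h1 : 2 * c * d - u = 0 := by
    have h := congrArg (fun p => Polynomial.coeff p 1) hp0
    simpa only [Polynomial.coeff_add, coeff_C_mul, coeff_X_one, coeff_C, Polynomial.coeff_zero, mul_one, if_neg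
      one_ne_zero, add_zero] using h
  have h4 : 4 * c ^ 2 * d ^ 2 = 1 := by linear_combination (2 * c * d + u) * h1 + hu
  exact ha2 c (by linear_combination (-4 * c ^ 2) * h0 + a * h4)

lemma capelli_two_pow : ∀ (n : ℕ) {K : Type u} [Field K] (a : K),
    (∀ b : K, b ^ 2 ≠ a) → (∀ c : K, -(4 * c ^ 4) ≠ a) →
    Irreducible ((X : K[X]) ^ (2 ^ n) - C a) := by
  intro n
  induction n with
  | zero => intro K _ a ha1 ha2; simpa using irreducible_X_sub_C a
  | succ n IH =>
    intro K _ a ha1 ha2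
    have h2 : Irreducible ((X : K[X]) ^ 2 - C a) :=
      X_pow_sub_C_irreducible_of_prime Nat.prime_two ha1
    have hcomp : (X : K[X]) ^ 2 ^ (n + 1) - C a = ((X : K[X]) ^ 2 - C a).comp (X ^ 2 ^ n) := by
      rw [sub_comp, pow_comp, X_comp, C_comp, ← pow_mul, ← pow_succ]
    rw [hcomp]
    apply Polynomial.irreducible_comp (monic_X_pow_sub_C a two_ne_zero) (monic_X_pow _) h2
    intro E _ _ x hx
    rw [Polynomial.map_pow, map_X]
    have hxint : IsIntegral K x := by
      by_contra h
      rw [minpoly.eq_zero h] at hx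
      exact X_pow_sub_C_ne_zero (by norm_num) a hx.symm
    have hming : minpoly K (AdjoinSimple.gen K x) = X ^ 2 - C a := (minpoly_gen K x).trans hx
    have hgint : IsIntegral K (AdjoinSimple.gen K x) := by
      by_contra h
      rw [minpoly.eq_zero h] at hming
      exact X_pow_sub_C_ne_zero (by norm_num) a hming.symm
    have hrep : ∀ t : K⟮x⟯, ∃ c d : K,
        t = algebraMap K _ c + algebraMap K _ d * AdjoinSimple.gen K x := by
      intro t
      obtain ⟨r, hr, hrt⟩ := (adjoin.powerBasis hxint).exists_eq_aeval t
      rw [adjoin.powerBasis_dim, hx, natDegree_X_pow_sub_C] at hr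
      refine ⟨r.coeff 0, r.coeff 1, ?_⟩
      conv_lhs => rw [hrt, eq_X_add_C_of_natDegree_le_one (Nat.lt_succ_iff.mp hr)]
      simp only [map_add, map_mul, aeval_C, aeval_X, adjoin.powerBasis_gen]
      ring
    apply IH (K := K⟮x⟯) (AdjoinSimple.gen K x)
    · intro b hb
      obtain ⟨c, d, rfl⟩ := hrep b
      exact sq_eq_unit_mul_gen_contra ha2 hgint hming c d (one_mul 1)
        (by rw [map_one, one_mul]; exact hb)
    · intro b hb
      obtain ⟨c, d, ht⟩ := hrep (2 * b ^ 2)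
      refine sq_eq_unit_mul_gen_contra ha2 hgint hming c d (by ring) (u := -1) ?_
      rw [← ht, map_neg, map_one]
      linear_combination -hb

lemma natDegree_le_finrank_of_root {F E : Type*} [Field F] [Field E] [Algebra F E]
    [FiniteDimensional F E] {q : Polynomial F} (hq : Irreducible q) {e : E}
    (he : aeval e q = 0) : q.natDegree ≤ Module.finrank F E := by
  have h := minpoly.eq_of_irreducible hq he
  have hlc : q.leadingCoeff⁻¹ ≠ 0 := inv_ne_zero (leadingCoeff_ne_zero.mpr hq.ne_zero)
  calc q.natDegree = (q * C q.leadingCoeff⁻¹).natDegree := (natDegree_mul_C hlc).symm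
    _ = (minpoly F e).natDegree := by rw [h]
    _ ≤ Module.finrank F E := minpoly.natDegree_le e

lemma quarter_contra {F K' : Type u} [Field F] [Field K'] [Algebra F K']
    [FiniteDimensional F K'] {f : Polynomial F} (hf4 : Irreducible (f.comp (X ^ 4)))
    (hK' : Module.finrank F K' ≤ f.natDegree)
    {y : K'} (hy : aeval y f = 0) (q : Polynomial K') (hqdeg : q.degree = 2)
    (hroot : ∀ (E : Type u) [Field E] [Algebra K' E] [Algebra F E] [IsScalarTower F K' E], ∀ e : E,
      aeval e q = 0 → e ^ 4 = algebraMap K' E y) : False := by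
  have hfdeg : f.natDegree ≠ 0 := by
    intro h
    apply not_irreducible_C (f.coeff 0)
    have hfc : f = C (f.coeff 0) := eq_C_of_natDegree_eq_zero h
    rw [hfc] at hf4
    simpa using hf4
  haveI := fact_irreducible_factor q
  set E := AdjoinRoot q.factor with hE
  have hfacdvd : q.factor ∣ q := factor_dvd_of_degree_ne_zero (by rw [hqdeg]; norm_num)
  set e : E := AdjoinRoot.root q.factor with he
  have heq : aeval e q = 0 := by
    refine aeval_eq_zero_of_dvd_aeval_eq_zero hfacdvd ?_
    rw [he, AdjoinRoot.aeval_eq, AdjoinRoot.mk_self]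
  haveI : FiniteDimensional K' E := (AdjoinRoot.powerBasis (q.irreducible_factor).ne_zero).finite
  haveI : FiniteDimensional F E := FiniteDimensional.trans F K' E
  have hrankKE : Module.finrank K' E ≤ 2 := by
    rw [(AdjoinRoot.powerBasis (q.irreducible_factor).ne_zero).finrank]
    rw [AdjoinRoot.powerBasis_dim]
    calc q.factor.natDegree ≤ q.natDegree := natDegree_le_of_dvd hfacdvd (fun h0 => by
          simp [h0] at hqdeg)
      _ = 2 := natDegree_eq_of_degree_eq_some hqdeg
  have he4 : e ^ 4 = algebraMap K' E y := hroot E e heq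
  have hroot4 : aeval e (f.comp (X ^ 4)) = 0 := by
    rw [aeval_comp]
    simp only [map_pow, aeval_X]
    rw [he4, aeval_algebraMap_apply, hy, map_zero]
  have hle := natDegree_le_finrank_of_root hf4 hroot4
  rw [natDegree_comp, natDegree_X_pow] at hle
  have htower : Module.finrank F K' * Module.finrank K' E = Module.finrank F E :=
    Module.finrank_mul_finrank F K' E
  have : Module.finrank F E ≤ f.natDegree * 2 :=
    htower ▸ Nat.mul_le_mul hK' hrankKE
  omega

lemma bridge {F : Type u} [Field F] {f : Polynomial F} (hm : f.Monic) (hf : Irreducible f)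
    (hf4 : Irreducible (f.comp ((X : Polynomial F) ^ 4))) (j : ℕ) :
    Irreducible (f.comp ((X : Polynomial F) ^ 2 ^ j)) := by
  apply Polynomial.irreducible_comp hm (monic_X_pow _) hf
  intro E _ _ x hx
  rw [Polynomial.map_pow, map_X]
  have hxint : IsIntegral F x := by
    by_contra h
    rw [minpoly.eq_zero h] at hx
    exact hf.ne_zero hx.symm
  haveI := adjoin.finiteDimensional hxint
  have hfin : Module.finrank F F⟮x⟯ = f.natDegree := by rw [adjoin.finrank hxint, hx]
  set g := AdjoinSimple.gen F x with hg
  have hy : aeval g f = 0 := by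
    have h1 : aeval x f = 0 := by rw [← hx]; exact minpoly.aeval F x
    apply (algebraMap F⟮x⟯ E).injective
    rw [map_zero]
    rw [← AdjoinSimple.algebraMap_gen F x] at h1
    rw [aeval_algebraMap_apply] at h1
    exact h1
  apply capelli_two_pow j g
  · intro b hb
    refine quarter_contra hf4 hfin.le hy (X ^ 2 - C b) ?_ ?_
    · rw [degree_X_pow_sub_C] <;> norm_num
    · intro E' _ _ _ _ e he
      simp only [map_sub, map_pow, aeval_X, aeval_C, sub_eq_zero] at he
      rw [← hb, map_pow]
      rw [show (4 : ℕ) = 2 * 2 from rfl, pow_mul, he]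
  · intro b hb
    refine quarter_contra hf4 hfin.le hy (X ^ 2 - C (2 * b) * X + C (2 * b ^ 2)) ?_ ?_
    · compute_degree!
    · intro E' _ _ _ _ e he
      simp only [map_add, map_sub, map_mul, map_pow, map_ofNat, aeval_X, aeval_C] at he
      rw [← hb]
      simp only [map_neg, map_mul, map_pow, map_ofNat]
      set φ := algebraMap (F⟮x⟯ : IntermediateField F E) E'
      linear_combination (e ^ 2 + 2 * φ b * e + 2 * (φ b) ^ 2) * he

end Capelli

namespace LaurentAux

variable (F : Type*) [Field F]

/-- The embedding `ℕ →+ expGroup 2` sending `m` to `m • (1/2^k)`. -/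
def iota (k : ℕ) : ℕ →+ expGroup 2 where
  toFun m := m • expGen 2 k
  map_zero' := zero_smul _ _
  map_add' a b := add_smul a b (expGen 2 k)

lemma iota_injective (k : ℕ) : Function.Injective (iota k) := by
  intro a b hab
  have h := congrArg (fun g : expGroup 2 => (g : ℚ)) hab
  simp only [iota, AddMonoidHom.coe_mk, ZeroHom.coe_mk, AddSubgroup.coe_nsmul, nsmul_eq_mul,
    expGen] at h
  have h2 : ((2 : ℚ) ^ k)⁻¹ ≠ 0 := by positivity
  exact_mod_cast mul_right_cancel₀ h2 h

/-- `F[X] →ₐ[F] D` sending `X` to `X^{1/2^k}`, as a composition of injective maps. -/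
lemma aeval_XRoot_eq (k : ℕ) :
    (Polynomial.aeval (XRoot F 2 k) : Polynomial F →ₐ[F] LaurentUnion F 2)
      = (AddMonoidAlgebra.mapDomainAlgHom F F (iota k)).comp
        (Polynomial.toFinsuppIsoAlg F).toAlgHom := by
  apply Polynomial.algHom_ext
  simp only [Polynomial.aeval_X, AlgHom.coe_comp, Function.comp_apply, AlgEquiv.toAlgHom_eq_coe,
    AlgHom.coe_coe]
  simp [iota, XRoot, Polynomial.toFinsupp_X]

lemma aeval_XRoot_injective (k : ℕ) :
    Function.Injective (Polynomial.aeval (XRoot F 2 k) : Polynomial F → LaurentUnion F 2) := by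
  have h := aeval_XRoot_eq F k
  intro p q hpq
  have hp : ∀ r : Polynomial F, (Polynomial.aeval (XRoot F 2 k)) r
      = AddMonoidAlgebra.mapDomain (iota k) ((Polynomial.toFinsuppIsoAlg F) r) := by
    intro r
    exact congrArg (fun φ => φ r) h
  rw [hp p, hp q] at hpq
  exact (Polynomial.toFinsuppIsoAlg F).injective
    (AddMonoidAlgebra.mapDomain_injective (iota_injective k) hpq)


lemma two_nz : (2 : ℕ) ≠ 0 := by norm_num

lemma XRoot_mul_neg (k : ℕ) :
    XRoot F 2 k * AddMonoidAlgebra.single (-expGen 2 k) (1 : F) = 1 := by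
  rw [XRoot, AddMonoidAlgebra.single_mul_single, add_neg_cancel, one_mul,
    AddMonoidAlgebra.one_def]

lemma isUnit_XRoot (k : ℕ) : IsUnit (XRoot F 2 k) :=
  IsUnit.of_mul_eq_one _ (XRoot_mul_neg F k)

lemma exp_rep (g : expGroup 2) : ∃ (m : ℤ) (k : ℕ), (g : ℚ) = m * ((2 : ℚ) ^ k)⁻¹ := by
  obtain ⟨q, hq⟩ := g
  induction hq using AddSubgroup.closure_induction with
  | mem x hx =>
    obtain ⟨n, rfl⟩ := hx
    exact ⟨1, n, by push_cast; ring⟩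
  | zero => exact ⟨0, 0, by push_cast; ring⟩
  | add x y hx hy ihx ihy =>
    obtain ⟨m1, k1, h1⟩ := ihx
    obtain ⟨m2, k2, h2⟩ := ihy
    refine ⟨m1 * 2 ^ k2 + m2 * 2 ^ k1, k1 + k2, ?_⟩
    simp only [AddSubgroup.coe_add] at *
    rw [h1, h2, pow_add, mul_inv]
    have e1 : ((2 : ℚ) ^ k1)⁻¹ ≠ 0 := by positivity
    have e2 : ((2 : ℚ) ^ k2)⁻¹ ≠ 0 := by positivity
    push_cast
    field_simp
  | neg x hx ihx =>
    obtain ⟨m1, k1, h1⟩ := ihx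
    exact ⟨-m1, k1, by simp only [AddSubgroup.coe_neg] at *; rw [h1]; push_cast; ring⟩

lemma single_mem_DSub (g : expGroup 2) (c : F) :
    ∃ k, AddMonoidAlgebra.single g c ∈ DSub F 2 k := by
  obtain ⟨m, k, h⟩ := exp_rep g
  refine ⟨k, ?_⟩
  rcases le_or_gt 0 m with hm | hm
  · have hpow : (XRoot F 2 k) ^ m.toNat = AddMonoidAlgebra.single g (1 : F) := by
      rw [XRoot, AddMonoidAlgebra.single_pow, one_pow]
      congr 1
      ext
      rw [AddSubgroup.coe_nsmul, nsmul_eq_mul]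
      rw [h]
      congr 1
      · exact_mod_cast congrArg (fun x : ℤ => (x : ℚ)) (Int.toNat_of_nonneg hm)
    have : AddMonoidAlgebra.single g c = c • ((XRoot F 2 k) ^ m.toNat) := by
      rw [hpow, AddMonoidAlgebra.smul_single, smul_eq_mul, mul_one]
    rw [this]
    exact Subalgebra.smul_mem _ (pow_mem (XRoot_mem_DSub F 2 k) _) c
  · have hpow : (AddMonoidAlgebra.single (-expGen 2 k) (1 : F)) ^ (-m).toNat
        = AddMonoidAlgebra.single g (1 : F) := by
      rw [AddMonoidAlgebra.single_pow, one_pow]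
      congr 1
      ext
      rw [AddSubgroup.coe_nsmul, nsmul_eq_mul]
      push_cast
      rw [h]
      rw [show (((-m).toNat : ℚ)) = -(m : ℚ) by
        exact_mod_cast congrArg (fun x : ℤ => (x : ℚ)) (Int.toNat_of_nonneg (by omega))]
      simp only [expGen]
      push_cast
      ring
    have : AddMonoidAlgebra.single g c
        = c • ((AddMonoidAlgebra.single (-expGen 2 k) (1 : F)) ^ (-m).toNat) := by
      rw [hpow, AddMonoidAlgebra.smul_single, smul_eq_mul, mul_one]
    rw [this]
    refine Subalgebra.smul_mem _ (pow_mem (show AddMonoidAlgebra.single (-expGen 2 k) (1 : F)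
      ∈ DSub F 2 k from Algebra.subset_adjoin (by simp)) _) c
  
lemma exists_mem_DSub (z : LaurentUnion F 2) : ∃ k, z ∈ DSub F 2 k := by
  induction z using AddMonoidAlgebra.induction with
  | zero => exact ⟨0, zero_mem _⟩
  | single_add a b f haf hb ih =>
    obtain ⟨k1, h1⟩ := single_mem_DSub F a b
    obtain ⟨k2, h2⟩ := ih
    exact ⟨max k1 k2, add_mem (DSub_mono F two_nz (le_max_left k1 k2) h1)
      (DSub_mono F two_nz (le_max_right k1 k2) h2)⟩


lemma exists_shift (k : ℕ) {z : LaurentUnion F 2} (hz : z ∈ DSub F 2 k) :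
    ∃ (m : ℕ) (q : Polynomial F),
      (XRoot F 2 k) ^ m * z = Polynomial.aeval (XRoot F 2 k) q := by
  let S : Subalgebra F (LaurentUnion F 2) :=
    { carrier := {z | ∃ (m : ℕ) (q : Polynomial F),
        (XRoot F 2 k) ^ m * z = Polynomial.aeval (XRoot F 2 k) q}
      mul_mem' := by
        rintro a b ⟨m1, q1, h1⟩ ⟨m2, q2, h2⟩
        exact ⟨m1 + m2, q1 * q2, by rw [map_mul, ← h1, ← h2]; ring⟩
      add_mem' := by
        rintro a b ⟨m1, q1, h1⟩ ⟨m2, q2, h2⟩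
        refine ⟨m1 + m2, Polynomial.X ^ m2 * q1 + Polynomial.X ^ m1 * q2, ?_⟩
        rw [map_add, map_mul, map_mul, map_pow, map_pow, Polynomial.aeval_X, ← h1, ← h2]
        ring
      algebraMap_mem' := fun r => ⟨0, Polynomial.C r, by simp⟩ }
  have hle : DSub F 2 k ≤ S := by
    apply Algebra.adjoin_le
    rintro x (rfl | rfl)
    · exact ⟨0, Polynomial.X, by simp⟩
    · exact ⟨1, 1, by rw [pow_one, XRoot_mul_neg, map_one]⟩
  exact hle hz

lemma aeval_comp_pow {k m : ℕ} (h : k ≤ m) (g : Polynomial F) :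
    Polynomial.aeval (XRoot F 2 m) (g.comp (Polynomial.X ^ 2 ^ (m - k)))
      = Polynomial.aeval (XRoot F 2 k) g := by
  rw [Polynomial.aeval_comp, map_pow, Polynomial.aeval_X, XRoot_pow F two_nz h]

lemma not_isUnit_aeval {g : Polynomial F} (hdeg : g.natDegree ≠ 0) (hg0 : g.eval 0 ≠ 0)
    (k : ℕ) : ¬ IsUnit (Polynomial.aeval (XRoot F 2 k) g) := by
  intro h
  obtain ⟨u, hu⟩ := h.exists_right_inv
  obtain ⟨m0, hm0⟩ := exists_mem_DSub F u
  set m := max k m0 with hm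
  have hum : u ∈ DSub F 2 m := DSub_mono F two_nz (le_max_right _ _) hm0
  obtain ⟨t, q, htq⟩ := exists_shift F m hum
  set g' := g.comp (Polynomial.X ^ 2 ^ (m - k)) with hg'def
  have hkey : g' * q = Polynomial.X ^ t := by
    apply aeval_XRoot_injective F m
    rw [map_mul, hg'def, aeval_comp_pow F (le_max_left _ _), ← htq, map_pow, Polynomial.aeval_X,
      mul_left_comm, hu, mul_one]
  have hdvd : g' ∣ Polynomial.X ^ t := ⟨q, hkey.symm⟩
  obtain ⟨i, hit, hassoc⟩ := (dvd_prime_pow Polynomial.prime_X t).mp hdvd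
  have hs : (2 : ℕ) ^ (m - k) ≠ 0 := pow_ne_zero _ two_nz
  have hg'0 : g'.eval 0 ≠ 0 := by
    rw [hg'def, Polynomial.eval_comp]
    simpa [Polynomial.eval_pow, zero_pow hs] using hg0
  rcases Nat.eq_zero_or_pos i with hi | hi
  · subst hi
    have hunit : IsUnit g' := by
      rw [← associated_one_iff_isUnit]
      simpa using hassoc
    have h0 : g'.natDegree = 0 := Polynomial.natDegree_eq_zero_of_isUnit hunit
    rw [hg'def, Polynomial.natDegree_comp, Polynomial.natDegree_X_pow] at h0
    exact absurd h0 (by positivity)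
  · have hXdvd : Polynomial.X ∣ g' :=
      dvd_trans (dvd_pow_self _ (Nat.pos_iff_ne_zero.mp hi)) hassoc.symm.dvd
    obtain ⟨r, hr⟩ := hXdvd
    rw [hr] at hg'0
    simp at hg'0

lemma irreducible_of_RSub {f : Polynomial F} {n : ℕ}
    (hirr : Irreducible (⟨Polynomial.aeval (XRoot F 2 n) f, aeval_XRoot_mem_RSub F 2 n f⟩ :
      RSub F 2 n)) : Irreducible f := by
  let ψ : Polynomial F ≃ₐ[F] (RSub F 2 n) :=
    (AlgEquiv.ofInjective _ (aeval_XRoot_injective F n)).trans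
      (Subalgebra.equivOfEq _ _ (Algebra.adjoin_singleton_eq_range_aeval F (XRoot F 2 n)).symm)
  have hψ : ψ f = ⟨Polynomial.aeval (XRoot F 2 n) f, aeval_XRoot_mem_RSub F 2 n f⟩ := by
    apply Subtype.ext
    simp [ψ, Subalgebra.equivOfEq]
    rfl
  exact (MulEquiv.irreducible_iff ψ.toMulEquiv).mp (by rw [show ψ.toMulEquiv f = ψ f from rfl, hψ]; exact hirr)

end LaurentAux

section Main

open LaurentAux Polynomial

variable {F : Type*} [Field F]

/-- A polynomial with nonzero constant coefficient that is not a unit does not divide `X^t`. -/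
lemma not_dvd_X_pow {g : Polynomial F} (hg0 : g.eval 0 ≠ 0) (hgu : ¬ IsUnit g) (t : ℕ) :
    ¬ g ∣ (X : Polynomial F) ^ t := by
  intro hdvd
  obtain ⟨i, hit, hassoc⟩ := (dvd_prime_pow Polynomial.prime_X t).mp hdvd
  rcases Nat.eq_zero_or_pos i with hi | hi
  · subst hi
    exact hgu (by rw [← associated_one_iff_isUnit]; simpa using hassoc)
  · have hXdvd : Polynomial.X ∣ g :=
      dvd_trans (dvd_pow_self _ (Nat.pos_iff_ne_zero.mp hi)) hassoc.symm.dvd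
    obtain ⟨r, hr⟩ := hXdvd
    rw [hr] at hg0
    simp at hg0

/-- From irreducibility of `f(X⁴)` to irreducibility of all `f(X^{2^j})`. -/
lemma all_two_pow_comp_irreducible {f : Polynomial F} (hf : Irreducible f)
    (h4 : Irreducible (f.comp ((X : Polynomial F) ^ 4))) (j : ℕ) :
    Irreducible (f.comp ((X : Polynomial F) ^ 2 ^ j)) := by
  have hfne : f ≠ 0 := hf.ne_zero
  have hcu : IsUnit (C f.leadingCoeff⁻¹) :=
    isUnit_C.mpr (isUnit_iff_ne_zero.mpr (inv_ne_zero (leadingCoeff_ne_zero.mpr hfne)))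
  set f1 := f * C f.leadingCoeff⁻¹ with hf1
  have hassoc : Associated f f1 := associated_mul_unit_right f _ hcu
  have hassoc4 : Associated (f.comp ((X : Polynomial F) ^ 4))
      (f1.comp ((X : Polynomial F) ^ 4)) := by
    rw [hf1, mul_comp, C_comp]
    exact associated_mul_unit_right _ _ hcu
  have hassocj : Associated (f.comp ((X : Polynomial F) ^ 2 ^ j))
      (f1.comp ((X : Polynomial F) ^ 2 ^ j)) := by
    rw [hf1, mul_comp, C_comp]
    exact associated_mul_unit_right _ _ hcu
  have hm : f1.Monic := monic_mul_leadingCoeff_inv hfne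
  exact hassocj.symm.irreducible
    (bridge hm (hassoc.irreducible hf) (hassoc4.irreducible h4) j)

end Main

/-- **Statement 16.** Let `f(X^{1/2ⁿ})` be an irreducible element of `Rₙ = F[X^{1/2ⁿ}]`
with `f(0) ≠ 0`.  Then the following are equivalent: (1) `f(X^{1/2ⁿ})` is a prime
element of `D`; (2) `f(X^{1/2ⁿ})` is irreducible in `D`; (3) `f(X⁴)` is irreducible in
`F[X]`; (4) `f(X^{1/2ᵏ})` is a prime element of `D` for all `k ≥ 0`. -/
theorem prime_in_laurentUnion_two_tfae (F : Type*) [Field F] (n : ℕ) (f : Polynomial F)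
    (h0 : f.eval 0 ≠ 0)
    (hirr : Irreducible (⟨Polynomial.aeval (XRoot F 2 n) f,
      aeval_XRoot_mem_RSub F 2 n f⟩ : RSub F 2 n)) :
    [Prime (Polynomial.aeval (XRoot F 2 n) f),
     Irreducible (Polynomial.aeval (XRoot F 2 n) f),
     Irreducible (f.comp ((X : Polynomial F) ^ 4)),
     ∀ k : ℕ, Prime (Polynomial.aeval (XRoot F 2 k) f)].TFAE := by
  have hf : Irreducible f := LaurentAux.irreducible_of_RSub F hirr
  have hfdeg : f.natDegree ≠ 0 := hf.natDegree_pos.ne'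
  tfae_have 1 → 2 := Prime.irreducible
  tfae_have 2 → 3 := by
    intro h2
    by_contra h3
    have heval4 : (f.comp ((X : Polynomial F) ^ 4)).eval 0 = f.eval 0 := by
      rw [eval_comp]; norm_num
    have hnu : ¬ IsUnit (f.comp ((X : Polynomial F) ^ 4)) := by
      intro h
      have := natDegree_eq_zero_of_isUnit h
      rw [natDegree_comp, natDegree_X_pow] at this
      omega
    rw [irreducible_iff] at h3
    push_neg at h3
    obtain ⟨u, v, huv, hu, hv⟩ := h3 hnu
    have huev : u.eval 0 * v.eval 0 = f.eval 0 := by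
      rw [← heval4, huv, eval_mul]
    have hu0 : u.eval 0 ≠ 0 := fun h => h0 (by rw [← huev, h, zero_mul])
    have hv0 : v.eval 0 ≠ 0 := fun h => h0 (by rw [← huev, h, mul_zero])
    have hudeg : u.natDegree ≠ 0 := by
      intro h
      apply hu
      rw [eq_C_of_natDegree_eq_zero h]
      exact isUnit_C.mpr (isUnit_iff_ne_zero.mpr (by rwa [coeff_zero_eq_eval_zero]))
    have hvdeg : v.natDegree ≠ 0 := by
      intro h
      apply hv
      rw [eq_C_of_natDegree_eq_zero h]
      exact isUnit_C.mpr (isUnit_iff_ne_zero.mpr (by rwa [coeff_zero_eq_eval_zero]))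
    have hsplit : Polynomial.aeval (XRoot F 2 n) f
        = Polynomial.aeval (XRoot F 2 (n + 2)) u * Polynomial.aeval (XRoot F 2 (n + 2)) v := by
      rw [← map_mul, ← huv, ← LaurentAux.aeval_comp_pow F (Nat.le_add_right n 2)]
      norm_num
    rcases h2.isUnit_or_isUnit hsplit with h | h
    · exact LaurentAux.not_isUnit_aeval F hudeg hu0 (n + 2) h
    · exact LaurentAux.not_isUnit_aeval F hvdeg hv0 (n + 2) h
  tfae_have 3 → 4 := by
    intro h3 k
    have hall : ∀ j, Irreducible (f.comp ((X : Polynomial F) ^ 2 ^ j)) :=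
      all_two_pow_comp_irreducible hf h3
    refine ⟨?_, ?_, ?_⟩
    · intro h
      apply hf.ne_zero
      apply LaurentAux.aeval_XRoot_injective F k
      rw [h, map_zero]
    · exact LaurentAux.not_isUnit_aeval F hfdeg h0 k
    · intro a b hdvd
      obtain ⟨c, hc⟩ := hdvd
      obtain ⟨ka, hka⟩ := LaurentAux.exists_mem_DSub F a
      obtain ⟨kb, hkb⟩ := LaurentAux.exists_mem_DSub F b
      obtain ⟨kc, hkc⟩ := LaurentAux.exists_mem_DSub F c
      set m := max k (max ka (max kb kc)) with hm
      have hkm : k ≤ m := le_max_left _ _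
      obtain ⟨ta, qa, hqa⟩ := LaurentAux.exists_shift F m
        (DSub_mono F LaurentAux.two_nz (le_trans (le_max_left _ _) (le_max_right _ _)) hka)
      obtain ⟨tb, qb, hqb⟩ := LaurentAux.exists_shift F m
        (DSub_mono F LaurentAux.two_nz
          (le_trans (le_trans (le_max_left _ _) (le_max_right _ _)) (le_max_right _ _)) hkb)
      obtain ⟨tc, qc, hqc⟩ := LaurentAux.exists_shift F m
        (DSub_mono F LaurentAux.two_nz
          (le_trans (le_trans (le_max_right _ _) (le_max_right _ _)) (le_max_right _ _)) hkc)
      set f' := f.comp ((X : Polynomial F) ^ 2 ^ (m - k)) with hf'def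
      have hf'irr : Irreducible f' := hall (m - k)
      have hf'prime : Prime f' := hf'irr.prime
      have hf'0 : f'.eval 0 ≠ 0 := by
        rw [hf'def, eval_comp]
        simpa [zero_pow (pow_ne_zero (m - k) LaurentAux.two_nz)] using h0
      have hkey : f' * ((X : Polynomial F) ^ (ta + tb) * qc)
          = (X : Polynomial F) ^ tc * (qa * qb) := by
        apply LaurentAux.aeval_XRoot_injective F m
        simp only [map_mul, map_pow, Polynomial.aeval_X]
        rw [hf'def, LaurentAux.aeval_comp_pow F hkm, ← hqa, ← hqb, ← hqc]
        linear_combination (-(XRoot F 2 m) ^ (ta + tb + tc)) * hc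
      have hdvd2 : f' ∣ (X : Polynomial F) ^ tc * (qa * qb) := ⟨_, hkey.symm⟩
      have hdvd3 : f' ∣ qa * qb := by
        rcases hf'prime.2.2 _ _ hdvd2 with h | h
        · exact absurd h (not_dvd_X_pow hf'0 hf'irr.not_isUnit tc)
        · exact h
      have haux : ∀ (t : ℕ) (q : Polynomial F) (z : LaurentUnion F 2),
          (XRoot F 2 m) ^ t * z = Polynomial.aeval (XRoot F 2 m) q → f' ∣ q →
          Polynomial.aeval (XRoot F 2 k) f ∣ z := by
        intro t q z ht hdq
        obtain ⟨r, hr⟩ := hdq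
        have hdd : Polynomial.aeval (XRoot F 2 k) f ∣ (XRoot F 2 m) ^ t * z := by
          rw [ht, hr, map_mul, hf'def, LaurentAux.aeval_comp_pow F hkm]
          exact dvd_mul_right _ _
        exact (IsUnit.dvd_mul_left ((LaurentAux.isUnit_XRoot F m).pow t)).mp hdd
      rcases hf'prime.2.2 _ _ hdvd3 with h | h
      · exact Or.inl (haux ta qa a hqa h)
      · exact Or.inr (haux tb qb b hqb h)
  tfae_have 4 → 1 := fun h => h n
  tfae_finish
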